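/- Let Ω ⊆ Σ^S be a configuration space with the uniform pivot property. An interaction Φ on Ω is variation-summable (i.e., ∑_{C : C∩A ≠ ∅} Var_A(Φ_C) < ∞ for all finite A) if and only if for every single site s, ∑_{C ∋ s} Var_s(Φ_C) < ∞. -/

import Mathlib

open scoped ENNReal Classical

/-- The variation of `f` on a set of sites `A`, over pairs of configurations of `Ω`
agreeing off `A`, valued in `ℝ≥0∞`. -/
noncomputable def Var {S α : Type*} (Ω : Set (S → α)) (A : Set S) (f : (S → α) → ℝ) : ℝ≥0∞ :=
  ⨆ p : {p : (S → α) × (S → α) // p.1 ∈ Ω ∧ p.2 ∈ Ω ∧ ∀ i ∉ A, p.1 i = p.2 i},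
    ENNReal.ofReal |f (p : (S → α) × (S → α)).2 - f (p : (S → α) × (S → α)).1|

/-- Uniform pivot property. -/
def UniformPivotProperty {S α : Type*} (Ω : Set (S → α)) : Prop :=
  ∀ A : Finset S, ∃ B : Finset S,
    ∀ x ∈ Ω, ∀ y ∈ Ω, (∀ i, i ∉ A → x i = y i) →
      ∃ (n : ℕ) (z : ℕ → S → α), z 0 = x ∧ z n = y ∧ (∀ i ≤ n, z i ∈ Ω) ∧
        ∀ i < n, ∃ s ∈ B, z i s ≠ z (i + 1) s ∧ ∀ t, t ≠ s → z i t = z (i + 1) t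

private lemma var_pair {S α : Type*} {Ω : Set (S → α)} {f : (S → α) → ℝ} {A : Set S}
    {x y : S → α} (hx : x ∈ Ω) (hy : y ∈ Ω) (h : ∀ i ∉ A, x i = y i) :
    ENNReal.ofReal |f y - f x| ≤ Var Ω A f :=
  le_iSup_of_le ⟨(x, y), hx, hy, h⟩ le_rfl

private lemma var_singleton_zero {S α : Type*} (Ω : Set (S → α)) (f : (S → α) → ℝ) (s : S)
    (h : ∀ x y : S → α, (∀ i, i ≠ s → x i = y i) → f x = f y) :
    Var Ω {s} f = 0 := by
  refine le_antisymm (iSup_le fun p => ?_) zero_le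
  have h1 : f (p : (S → α) × (S → α)).1 = f (p : (S → α) × (S → α)).2 :=
    h _ _ (fun i hi => p.2.2.2 i (by simpa using hi))
  simp [h1]

private lemma telescope {S α : Type*} (f : (S → α) → ℝ) (z : ℕ → S → α) (n : ℕ) :
    ENNReal.ofReal |f (z n) - f (z 0)| ≤
      ∑ i ∈ Finset.range n, ENNReal.ofReal |f (z (i + 1)) - f (z i)| := by
  induction n with
  | zero => simp
  | succ k IH =>
    rw [Finset.sum_range_succ]
    calc ENNReal.ofReal |f (z (k + 1)) - f (z 0)|
        ≤ ENNReal.ofReal (|f (z k) - f (z 0)| + |f (z (k + 1)) - f (z k)|) := by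
          apply ENNReal.ofReal_le_ofReal
          have := abs_sub_le (f (z (k + 1))) (f (z k)) (f (z 0))
          linarith [abs_sub_le (f (z (k + 1))) (f (z k)) (f (z 0))]
      _ = ENNReal.ofReal |f (z k) - f (z 0)| + ENNReal.ofReal |f (z (k + 1)) - f (z k)| :=
          ENNReal.ofReal_add (abs_nonneg _) (abs_nonneg _)
      _ ≤ _ := add_le_add_left IH _

private lemma path_bound {S α : Type*} [Fintype α] (Ω : Set (S → α)) (f : (S → α) → ℝ)
    (B : Finset S) (n : ℕ) :
    ∀ z : ℕ → S → α, (∀ i ≤ n, z i ∈ Ω) →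
      (∀ i < n, ∃ s ∈ B, z i s ≠ z (i + 1) s ∧ ∀ t, t ≠ s → z i t = z (i + 1) t) →
      ENNReal.ofReal |f (z n) - f (z 0)| ≤
        (Fintype.card (↥B → α) : ℝ≥0∞) * ∑ s ∈ B, Var Ω {s} f := by
  induction n using Nat.strong_induction_on with
  | _ n IH =>
  intro z hmem hpiv
  by_cases hrep : ∃ i j, i < j ∧ j ≤ n ∧ z i = z j
  · obtain ⟨i, j, hij, hjn, hzij⟩ := hrep
    set d := j - i with hd
    set m := n - d with hm
    have hd1 : 1 ≤ d := by omega
    have him : i ≤ m := by omega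
    have hmd : m + d = n := by omega
    have hmn : m < n := by omega
    have hidj : i + d = j := by omega
    set z' : ℕ → S → α := fun k => if k ≤ i then z k else z (k + d) with hz'
    have hz'le : ∀ k, k ≤ i → z' k = z k := fun k hk => by simp only [hz', if_pos hk]
    have hz'gt : ∀ k, ¬ k ≤ i → z' k = z (k + d) := fun k hk => by simp only [hz', if_neg hk]
    have hmem' : ∀ k ≤ m, z' k ∈ Ω := by
      intro k hk
      by_cases h : k ≤ i
      · rw [hz'le k h]; exact hmem k (by omega)
      · rw [hz'gt k h]; exact hmem (k + d) (by omega)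
    have hpiv' : ∀ k < m, ∃ s ∈ B, z' k s ≠ z' (k + 1) s ∧
        ∀ t, t ≠ s → z' k t = z' (k + 1) t := by
      intro k hk
      rcases lt_trichotomy k i with h | h | h
      · rw [hz'le k h.le, hz'le (k + 1) h]
        exact hpiv k (by omega)
      · rw [hz'le k h.le, hz'gt (k + 1) (by omega)]
        have e1 : z k = z j := by rw [h, hzij]
        have e2 : k + 1 + d = j + 1 := by omega
        rw [e1, e2]
        exact hpiv j (by omega)
      · rw [hz'gt k (by omega), hz'gt (k + 1) (by omega)]
        have e : k + 1 + d = (k + d) + 1 := by omega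
        rw [e]
        exact hpiv (k + d) (by omega)
    have hIH := IH m hmn z' hmem' hpiv'
    have h0 : z' 0 = z 0 := hz'le 0 (Nat.zero_le i)
    have hl : z' m = z n := by
      by_cases hmi : m ≤ i
      · have hmi' : m = i := le_antisymm hmi him
        have hjn' : j = n := by omega
        rw [hz'le m hmi, hmi', hzij, hjn']
      · rw [hz'gt m hmi, hmd]
    rwa [h0, hl] at hIH
  · push_neg at hrep
    have hoff : ∀ i ≤ n, ∀ t, t ∉ B → z i t = z 0 t := by
      intro i
      induction i with
      | zero => intro _ _ _; rfl
      | succ k IHk =>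
        intro hk t ht
        obtain ⟨s, hsB, _, hst⟩ := hpiv k (by omega)
        rw [← hst t (fun h => ht (h ▸ hsB))]
        exact IHk (by omega) t ht
    have hinj : Function.Injective (fun i : Fin (n + 1) => fun b : ↥B => z i b) := by
      intro i j hgij
      by_contra hne
      have hzeq : z i = z j := by
        funext t
        by_cases ht : t ∈ B
        · exact congrFun hgij ⟨t, ht⟩
        · rw [hoff i (Nat.lt_succ_iff.mp i.isLt) t ht, hoff j (Nat.lt_succ_iff.mp j.isLt) t ht]
      rcases lt_or_gt_of_ne hne with hlt | hlt
      · exact hrep i j (Fin.lt_def.mp hlt) (Nat.lt_succ_iff.mp j.isLt) hzeq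
      · exact hrep j i (Fin.lt_def.mp hlt) (Nat.lt_succ_iff.mp i.isLt) hzeq.symm
    have hcard : n + 1 ≤ Fintype.card (↥B → α) := by
      simpa using Fintype.card_le_of_injective _ hinj
    calc ENNReal.ofReal |f (z n) - f (z 0)|
        ≤ ∑ i ∈ Finset.range n, ENNReal.ofReal |f (z (i + 1)) - f (z i)| := telescope f z n
      _ ≤ ∑ i ∈ Finset.range n, ∑ s ∈ B, Var Ω {s} f := by
          apply Finset.sum_le_sum
          intro i hi
          rw [Finset.mem_range] at hi
          obtain ⟨s, hsB, _, hst⟩ := hpiv i hi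
          have h1 : ENNReal.ofReal |f (z (i + 1)) - f (z i)| ≤ Var Ω {s} f :=
            var_pair (hmem i (by omega)) (hmem (i + 1) (by omega))
              (fun t ht => hst t (by simpa using ht))
          exact h1.trans (Finset.single_le_sum (f := fun t => Var Ω {t} f)
            (fun _ _ => zero_le) hsB)
      _ = (n : ℝ≥0∞) * ∑ s ∈ B, Var Ω {s} f := by
          rw [Finset.sum_const, Finset.card_range, nsmul_eq_mul]
      _ ≤ (Fintype.card (↥B → α) : ℝ≥0∞) * ∑ s ∈ B, Var Ω {s} f :=
          by gcongr; exact_mod_cast (by omega : n ≤ Fintype.card (↥B → α))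

private lemma var_le_sum {S α : Type*} [Fintype α] {Ω : Set (S → α)} {A B : Finset S}
    (hB : ∀ x ∈ Ω, ∀ y ∈ Ω, (∀ i, i ∉ A → x i = y i) →
      ∃ (n : ℕ) (z : ℕ → S → α), z 0 = x ∧ z n = y ∧ (∀ i ≤ n, z i ∈ Ω) ∧
        ∀ i < n, ∃ s ∈ B, z i s ≠ z (i + 1) s ∧ ∀ t, t ≠ s → z i t = z (i + 1) t)
    (f : (S → α) → ℝ) :
    Var Ω (A : Set S) f ≤ (Fintype.card (↥B → α) : ℝ≥0∞) * ∑ s ∈ B, Var Ω {s} f := by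
  apply iSup_le
  rintro ⟨⟨x, y⟩, hx, hy, hxy⟩
  obtain ⟨n, z, hz0, hzn, hmem, hpiv⟩ := hB x hx y hy (fun i hi => hxy i (by simpa using hi))
  have h := path_bound Ω f B n z hmem hpiv
  rwa [hz0, hzn] at h

/-- on a configuration space with the uniform pivot property, an interaction is
variation-summable iff `∑_{C ∋ s} Var_s(Φ_C) < ∞` for every single site `s`. -/
theorem stmt_11 {S α : Type*} [Countable S] [Fintype α]
    [TopologicalSpace α] [DiscreteTopology α]
    (Ω : Set (S → α)) (hne : Ω.Nonempty) (hcomp : IsCompact Ω)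
    (hupivot : UniformPivotProperty Ω)
    (Φ : Finset S → (S → α) → ℝ)
    (hlocal : ∀ C : Finset S, ∀ x y : S → α, (∀ i ∈ C, x i = y i) → Φ C x = Φ C y) :
    (∀ A : Finset S,
        (∑' C : {C : Finset S // (C ∩ A).Nonempty}, Var Ω (A : Set S) (Φ C)) ≠ ⊤)
      ↔ ∀ s : S, (∑' C : {C : Finset S // s ∈ C}, Var Ω {s} (Φ C)) ≠ ⊤ := by
  constructor
  · intro h s
    have h1 := h {s}
    rw [Finset.coe_singleton] at h1
    have h2 : (∑' C : {C : Finset S // s ∈ C}, Var Ω {s} (Φ C))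
        = ∑' C : {C : Finset S // (C ∩ ({s} : Finset S)).Nonempty}, Var Ω {s} (Φ C) :=
      (Equiv.subtypeEquivRight
        (fun C => by simp [Finset.Nonempty, Finset.mem_inter])).tsum_eq
        (fun C : {C : Finset S // (C ∩ ({s} : Finset S)).Nonempty} => Var Ω {s} (Φ C))
    rw [h2]
    exact h1
  · intro h A
    obtain ⟨B, hB⟩ := hupivot A
    have hsub : ∀ s : S,
        (∑' C : {C : Finset S // (C ∩ A).Nonempty}, Var Ω {s} (Φ C))
          ≤ ∑' C : {C : Finset S // s ∈ C}, Var Ω {s} (Φ C) := by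
      intro s
      have h1 : (∑' C : {C : Finset S // (C ∩ A).Nonempty}, Var Ω {s} (Φ C))
          ≤ ∑' C : Finset S, Var Ω {s} (Φ C) :=
        ENNReal.tsum_comp_le_tsum_of_injective Subtype.val_injective _
      have h2 : (∑' C : {C : Finset S // s ∈ C}, Var Ω {s} (Φ C))
          = ∑' C : Finset S, Var Ω {s} (Φ C) :=
        tsum_subtype_eq_of_support_subset (f := fun C : Finset S => Var Ω {s} (Φ C))
          (s := {C : Finset S | s ∈ C}) (by
            intro C hC
            by_contra hsC
            apply hC
            exact var_singleton_zero Ω (Φ C) s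
              (fun x y hxy => hlocal C x y (fun i hi => hxy i (fun hi' => hsC (hi' ▸ hi)))))
      rw [h2]
      exact h1
    have key : (∑' C : {C : Finset S // (C ∩ A).Nonempty}, Var Ω (A : Set S) (Φ C))
        ≤ (Fintype.card (↥B → α) : ℝ≥0∞) * ∑ s ∈ B,
            ∑' C : {C : Finset S // s ∈ C}, Var Ω {s} (Φ C) := by
      calc (∑' C : {C : Finset S // (C ∩ A).Nonempty}, Var Ω (A : Set S) (Φ C))
          ≤ ∑' C : {C : Finset S // (C ∩ A).Nonempty},
              (Fintype.card (↥B → α) : ℝ≥0∞) * ∑ s ∈ B, Var Ω {s} (Φ C) :=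
            ENNReal.tsum_le_tsum (fun C => var_le_sum hB (Φ C))
        _ = (Fintype.card (↥B → α) : ℝ≥0∞) * ∑' C : {C : Finset S // (C ∩ A).Nonempty},
              ∑ s ∈ B, Var Ω {s} (Φ C) := ENNReal.tsum_mul_left
        _ = (Fintype.card (↥B → α) : ℝ≥0∞) * ∑ s ∈ B,
              ∑' C : {C : Finset S // (C ∩ A).Nonempty}, Var Ω {s} (Φ C) := by
            rw [Summable.tsum_finsetSum (fun _ _ => ENNReal.summable)]
        _ ≤ _ := by
            gcongr with s hs
            exact hsub s
    exact ne_top_of_le_ne_top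
      (ENNReal.mul_ne_top (ENNReal.natCast_ne_top _)
        (ENNReal.sum_lt_top.mpr fun s _ => lt_top_iff_ne_top.mpr (h s)).ne) key
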